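/- Let n ≥ 1, let P be an n × n matrix over 𝔽₂ with P Pᵀ = I, let G be the associated bipartite graph on V = L ⊔ R, fix i ∈ L, and let D ⊆ R be a set with |D ∩ N_i| odd. Let K_D' = X_D Z_{Odd(D)\{i}}, where Odd(D) is computed in G. Then K_D' |G \ i⟩ = |G \ i⟩ and K_D' ( Z_{N_i} |G \ i⟩ ) = − Z_{N_i} |G \ i⟩; that is, K_D' distinguishes the two encoded basis states |G\i⟩ and Z_{N_i}|G\i⟩ by its ±1 eigenvalue. -/

import Mathlib

open Matrix

/-- The bipartite graph on `Fin n ⊕ Fin n` (left copy `L = Sum.inl`, right copy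
`R = Sum.inr`) in which `Sum.inl a` is adjacent to `Sum.inr b` iff `P a b = 1`,
and there are no other edges. -/
def bipGraph (n : ℕ) (P : Matrix (Fin n) (Fin n) (ZMod 2)) :
    SimpleGraph (Fin n ⊕ Fin n) where
  Adj u v := (∃ a b, P a b = 1 ∧ u = Sum.inl a ∧ v = Sum.inr b) ∨
             (∃ a b, P a b = 1 ∧ u = Sum.inr b ∧ v = Sum.inl a)
  symm := by
    constructor
    rintro u v (⟨a, b, h, rfl, rfl⟩ | ⟨a, b, h, rfl, rfl⟩)
    · exact Or.inr ⟨a, b, h, rfl, rfl⟩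
    · exact Or.inl ⟨a, b, h, rfl, rfl⟩
  loopless := by
    constructor
    rintro u (⟨a, b, h, rfl, h2⟩ | ⟨a, b, h, rfl, h2⟩) <;> simp at h2

/-- The odd neighbourhood of a set `S`: the set of vertices `v` such that the number
of neighbours of `v` lying in `S` is odd. -/
def oddNbhd {V : Type*} (G : SimpleGraph V) (S : Set V) : Set V :=
  {v | Odd (G.neighborSet v ∩ S).ncard}

/-- The quadratic form of a graph: `q(x) = ∑_{{u,v} ∈ E(H)} x_u x_v` over `𝔽₂`. -/
noncomputable def qForm {W : Type*} (H : SimpleGraph W) (x : W → ZMod 2) : ZMod 2 :=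
  ∑ᶠ e ∈ H.edgeSet, Sym2.lift ⟨fun u v => x u * x v, fun _ _ => mul_comm _ _⟩ e

/-- The graph state of `H`: the vector in `ℂ^(W → ZMod 2)` with amplitude
`2^{-|W|/2} (-1)^{q(x)}` at the basis label `x`. -/
noncomputable def graphState {W : Type*} (H : SimpleGraph W) : (W → ZMod 2) → ℂ :=
  fun x => (Real.sqrt 2 : ℂ)⁻¹ ^ Nat.card W * (-1 : ℂ) ^ (qForm H x).val

/-- The Pauli operator `X_S = ∏_{w ∈ S} X_w`, acting by `(X_S ψ)(x) = ψ(x + 1_S)`. -/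
noncomputable def XOp {W : Type*} (S : Set W) (ψ : (W → ZMod 2) → ℂ) : (W → ZMod 2) → ℂ :=
  fun x => ψ (x + S.indicator 1)

/-- The Pauli operator `Z_S = ∏_{w ∈ S} Z_w`, acting by
`(Z_S ψ)(x) = (-1)^{∑_{w ∈ S} x_w} ψ(x)`. -/
noncomputable def ZOp {W : Type*} (S : Set W) (ψ : (W → ZMod 2) → ℂ) : (W → ZMod 2) → ℂ :=
  fun x => (-1 : ℂ) ^ (∑ᶠ w ∈ S, (x w).val) * ψ x

section Helpers

open Finset SimpleGraph

lemma sgn_natCast (m : ℕ) : (-1:ℂ)^m = (-1:ℂ)^((m : ZMod 2)).val := by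
  rcases Nat.even_or_odd m with h | h
  · rw [h.neg_one_pow]
    obtain ⟨k, rfl⟩ := h
    push_cast
    rw [show ((k:ZMod 2) + k) = 2 * k by ring, show ((2:ZMod 2)) = 0 by decide]
    simp
  · rw [h.neg_one_pow]
    obtain ⟨k, rfl⟩ := h
    push_cast
    rw [show ((2:ZMod 2)) = 0 by decide]
    simp [ZMod.val_one]

lemma zmod2_cases (a : ZMod 2) : a = 0 ∨ a = 1 := by
  fin_cases a
  · exact Or.inl rfl
  · exact Or.inr rfl

lemma sgn_add (a b : ZMod 2) : (-1:ℂ)^((a+b).val) = (-1)^a.val * (-1)^b.val := by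
  rcases zmod2_cases a with rfl|rfl <;> rcases zmod2_cases b with rfl|rfl <;>
    simp [ZMod.val_one, show ((1:ZMod 2)+1) = 0 by decide]

lemma sgn_add_one (a : ZMod 2) : (-1:ℂ)^((a+1).val) = -(-1)^a.val := by
  rcases zmod2_cases a with rfl|rfl <;> simp [ZMod.val_one, show ((1:ZMod 2)+1) = 0 by decide]

lemma natCast_zmod2_eq_one_iff (m : ℕ) : (m : ZMod 2) = 1 ↔ Odd m := by
  rw [Nat.odd_iff, ← ZMod.natCast_mod m 2]
  have : m % 2 = 0 ∨ m % 2 = 1 := by omega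
  rcases this with h|h <;> simp [h]

lemma finsum_mem_toFinset {α : Type*} (T : Set α) [Fintype ↥T] (f : α → ℕ) :
    ∑ᶠ w ∈ T, f w = ∑ w ∈ T.toFinset, f w := by
  rw [← finsum_mem_coe_finset]
  congr 1
  simp

lemma ZOp_exp_eval {α : Type*} (T : Set α) [Fintype ↥T] (x : α → ZMod 2) :
    (-1:ℂ) ^ (∑ᶠ w ∈ T, (x w).val) = (-1:ℂ) ^ ((∑ w ∈ T.toFinset, x w).val) := by
  rw [finsum_mem_toFinset, sgn_natCast]
  congr 2
  push_cast
  simp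

variable {W : Type*} [Fintype W] [DecidableEq W] (H : SimpleGraph W) [DecidableRel H.Adj]

set_option linter.unusedSectionVars false

lemma qForm_eq_sum (x : W → ZMod 2) :
    qForm H x = ∑ e ∈ H.edgeFinset,
      Sym2.lift ⟨fun u v => x u * x v, fun _ _ => mul_comm _ _⟩ e := by
  rw [qForm, ← finsum_mem_coe_finset]
  congr 1
  simp [Set.ext_iff]

lemma dart_sum_fst (g : W → W → ZMod 2) :
    ∑ d : H.Dart, g d.fst d.snd = ∑ v, ∑ u ∈ H.neighborFinset v, g v u := by
  rw [← Finset.sum_fiberwise_of_maps_to (g := fun d : H.Dart => d.fst)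
      (fun d _ => Finset.mem_univ d.fst) (fun d => g d.fst d.snd)]
  refine Finset.sum_congr rfl fun v _ => ?_
  have h1 : (Finset.univ.filter fun d : H.Dart => d.fst = v)
      = Finset.univ.image (H.dartOfNeighborSet v) := by
    ext d
    simp only [mem_filter, mem_univ, true_and, mem_image]
    constructor
    · rintro rfl
      exact ⟨⟨d.snd, d.adj⟩, rfl⟩
    · rintro ⟨u, rfl⟩
      rfl
  rw [h1, Finset.sum_image (fun a _ b _ h => H.dartOfNeighborSet_injective v h)]
  rw [neighborFinset_def, ← Finset.sum_set_coe]
  rfl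

lemma dart_sum_edge (g : W → W → ZMod 2) :
    ∑ d : H.Dart, g d.fst d.snd = ∑ e ∈ H.edgeFinset,
      Sym2.lift ⟨fun u v => g u v + g v u, fun _ _ => add_comm _ _⟩ e := by
  rw [← Finset.sum_fiberwise_of_maps_to (g := fun d : H.Dart => d.edge) (t := H.edgeFinset)
      (fun d _ => by rw [mem_edgeFinset]; exact d.edge_mem) (fun d => g d.fst d.snd)]
  refine Finset.sum_congr rfl fun e he => ?_
  rw [mem_edgeFinset] at he
  induction e with
  | _ u v =>
    have h1 : (Finset.univ.filter fun d' : H.Dart => d'.edge = s(u,v))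
        = {(⟨(u,v), he⟩ : H.Dart), Dart.symm ⟨(u,v), he⟩} := by
      ext d'
      simp only [mem_filter, mem_univ, true_and, mem_insert, mem_singleton]
      rw [show s(u,v) = Dart.edge ⟨(u,v), he⟩ from rfl]
      exact dart_edge_eq_iff d' _
    rw [h1, Finset.sum_insert (by simpa using (Dart.symm_ne (⟨(u,v), he⟩ : H.Dart)).symm)]
    simp [Dart.symm]

lemma qForm_add (x s : W → ZMod 2) :
    qForm H (x + s) = qForm H x + qForm H s
      + ∑ v, x v * ∑ u ∈ H.neighborFinset v, s u := by
  have h := dart_sum_edge H (fun v u => x v * s u)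
  rw [dart_sum_fst H (fun v u => x v * s u)] at h
  have h2 : ∀ v : W, x v * ∑ u ∈ H.neighborFinset v, s u
      = ∑ u ∈ H.neighborFinset v, x v * s u := fun v => Finset.mul_sum _ _ _
  simp_rw [h2]
  rw [h, qForm_eq_sum, qForm_eq_sum, qForm_eq_sum, ← Finset.sum_add_distrib,
    ← Finset.sum_add_distrib]
  refine Finset.sum_congr rfl fun e he => ?_
  induction e with
  | _ u v =>
    simp only [Sym2.lift_mk, Pi.add_apply]
    ring

end Helpers

/-- for the bipartite graph `G` of `P` with `P Pᵀ = I`, `i ∈ L`, and `D ⊆ R`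
with `|D ∩ N_i|` odd, the operator `K_D′ = X_D Z_{Odd(D) \\ {i}}` (with `Odd(D)` computed in
`G`) fixes `|G \\ i⟩` and negates `Z_{N_i}|G \\ i⟩`. -/


theorem stmt10 (n : ℕ) (hn : 1 ≤ n) (P : Matrix (Fin n) (Fin n) (ZMod 2))
    (hP : P * Pᵀ = 1) (i : Fin n) (D : Set (Fin n ⊕ Fin n))
    (hD : D ⊆ Set.range Sum.inr)
    (hodd : Odd ((D ∩ (bipGraph n P).neighborSet (Sum.inl i)).ncard)) :
    (XOp {w : ({Sum.inl i}ᶜ : Set (Fin n ⊕ Fin n)) | ↑w ∈ D}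
      (ZOp {w : ({Sum.inl i}ᶜ : Set (Fin n ⊕ Fin n)) |
              ↑w ∈ oddNbhd (bipGraph n P) D \ {Sum.inl i}}
        (graphState (SimpleGraph.induce ({Sum.inl i}ᶜ : Set (Fin n ⊕ Fin n))
          (bipGraph n P)))) =
      graphState (SimpleGraph.induce ({Sum.inl i}ᶜ : Set (Fin n ⊕ Fin n)) (bipGraph n P))) ∧
    (XOp {w : ({Sum.inl i}ᶜ : Set (Fin n ⊕ Fin n)) | ↑w ∈ D}
      (ZOp {w : ({Sum.inl i}ᶜ : Set (Fin n ⊕ Fin n)) |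
              ↑w ∈ oddNbhd (bipGraph n P) D \ {Sum.inl i}}
        (ZOp {w : ({Sum.inl i}ᶜ : Set (Fin n ⊕ Fin n)) |
                (bipGraph n P).Adj (Sum.inl i) ↑w}
          (graphState (SimpleGraph.induce ({Sum.inl i}ᶜ : Set (Fin n ⊕ Fin n))
            (bipGraph n P))))) =
      -(ZOp {w : ({Sum.inl i}ᶜ : Set (Fin n ⊕ Fin n)) |
                (bipGraph n P).Adj (Sum.inl i) ↑w}
          (graphState (SimpleGraph.induce ({Sum.inl i}ᶜ : Set (Fin n ⊕ Fin n))
            (bipGraph n P))))) := by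
  classical
  let V := (Fin n ⊕ Fin n)
  set G := bipGraph n P with hG
  set Ws : Set V := {Sum.inl i}ᶜ with hWs
  set H := SimpleGraph.induce Ws G with hH
  -- adjacency facts
  have hGadj : ∀ u v : V, G.Adj u v ↔
      ((∃ a b, P a b = 1 ∧ u = Sum.inl a ∧ v = Sum.inr b) ∨
       (∃ a b, P a b = 1 ∧ u = Sum.inr b ∧ v = Sum.inl a)) := fun u v => Iff.rfl
  have hHadj : ∀ u v : ↥Ws, H.Adj u v ↔ G.Adj ↑u ↑v := fun u v => by
    rw [hH]; exact SimpleGraph.comap_adj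
  set s0 : ↥Ws → ZMod 2 :=
    ({w : ↥Ws | ↑w ∈ D}).indicator 1 with hs0
  -- s0 vanishes off D
  have hs0_eq : ∀ w : ↥Ws, s0 w = if (w : Fin n ⊕ Fin n) ∈ D then 1 else 0 := by
    intro w
    rw [hs0, Set.indicator_apply]
    simp [Set.mem_setOf_eq]
  have hs0_inl : ∀ (w : ↥Ws) (a : Fin n), (w : Fin n ⊕ Fin n) = Sum.inl a → s0 w = 0 := by
    intro w a hw
    rw [hs0_eq]
    rw [if_neg]
    intro hmem
    obtain ⟨b, hb⟩ := hD hmem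
    rw [hw] at hb
    exact Sum.inl_ne_inr hb.symm
  -- F2 : qForm H s0 = 0
  have hF2 : qForm H s0 = 0 := by
    rw [qForm_eq_sum]
    refine Finset.sum_eq_zero fun e he => ?_
    rw [SimpleGraph.mem_edgeFinset] at he
    induction e with
    | _ u v =>
      rw [SimpleGraph.mem_edgeSet, hHadj] at he
      simp only [Sym2.lift_mk]
      rcases (hGadj _ _).mp he with ⟨a, b, _, ha, _⟩ | ⟨a, b, _, _, hb⟩
      · rw [hs0_inl u a ha, zero_mul]
      · rw [hs0_inl v a hb, mul_zero]
  -- degree sums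
  set d : ↥Ws → ZMod 2 := fun v => ∑ u ∈ H.neighborFinset v, s0 u with hd
  have hF3 : ∀ v : ↥Ws, d v = (((G.neighborSet ↑v ∩ D).ncard : ℕ) : ZMod 2) := by
    intro v
    rw [hd]
    simp only [hs0_eq]
    rw [Finset.sum_boole]
    rw [Set.ncard_eq_toFinset_card']
    congr 1
    have himg : ((H.neighborFinset v).filter fun u : ↥Ws => (u : Fin n ⊕ Fin n) ∈ D).image Subtype.val
        = (G.neighborSet ↑v ∩ D).toFinset := by
      ext t
      simp only [Finset.mem_image, Finset.mem_filter, SimpleGraph.mem_neighborFinset,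
        Set.mem_toFinset, Set.mem_inter_iff, SimpleGraph.mem_neighborSet]
      constructor
      · rintro ⟨u, ⟨hu1, hu2⟩, rfl⟩
        exact ⟨(hHadj _ _).mp hu1, hu2⟩
      · rintro ⟨ht1, ht2⟩
        have htW : t ∈ Ws := by
          obtain ⟨b, hb⟩ := hD ht2
          rw [hWs]
          simp [← hb]
        exact ⟨⟨t, htW⟩, ⟨(hHadj _ _).mpr ht1, ht2⟩, rfl⟩
    rw [← himg, Finset.card_image_of_injective _ Subtype.val_injective]
  -- the Z-set finset
  set T : Set ↥Ws := {w : ↥Ws | ↑w ∈ oddNbhd G D \ {Sum.inl i}} with hT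
  have hF4 : T.toFinset = Finset.univ.filter fun v => d v = 1 := by
    ext w
    simp only [Set.mem_toFinset, hT, Set.mem_setOf_eq, Set.mem_diff, Set.mem_singleton_iff,
      Finset.mem_filter, Finset.mem_univ, true_and]
    rw [hF3, natCast_zmod2_eq_one_iff]
    have hwne : (↑w : V) ≠ Sum.inl i := w.2
    constructor
    · rintro ⟨h1, -⟩
      exact h1
    · intro h1
      exact ⟨h1, hwne⟩
  have hF5 : ∀ x : ↥Ws → ZMod 2, ∑ v, x v * d v = ∑ w ∈ T.toFinset, x w := by
    intro x
    rw [hF4, Finset.sum_filter]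
    refine Finset.sum_congr rfl fun v _ => ?_
    rcases zmod2_cases (d v) with h | h <;> rw [h] <;> simp
  have hF6 : ∑ w ∈ T.toFinset, s0 w = 0 := by
    refine Finset.sum_eq_zero fun w hw => ?_
    rw [Set.mem_toFinset, hT, Set.mem_setOf_eq, Set.mem_diff] at hw
    rw [hs0_eq, if_neg]
    intro hmem
    obtain ⟨b, hb⟩ := hD hmem
    have hodd' : Odd ((G.neighborSet ↑w ∩ D).ncard) := hw.1
    have : G.neighborSet ↑w ∩ D = ∅ := by
      ext t
      simp only [Set.mem_inter_iff, SimpleGraph.mem_neighborSet, Set.mem_empty_iff_false,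
        iff_false, not_and]
      intro hadj htD
      rcases (hGadj _ _).mp hadj with ⟨a, b', _, ha, _⟩ | ⟨a, b', _, _, ht⟩
      · rw [← hb] at ha; simp at ha
      · obtain ⟨c, hc⟩ := hD htD
        rw [ht] at hc
        simp at hc
    rw [this] at hodd'
    simp at hodd'
  -- the N_i set
  set NI : Set ↥Ws := {w : ↥Ws | G.Adj (Sum.inl i) ↑w} with hNI
  have hF7 : ∑ w ∈ NI.toFinset, s0 w = 1 := by
    simp only [hs0_eq]
    rw [Finset.sum_boole]
    rw [natCast_zmod2_eq_one_iff]
    have himg : (NI.toFinset.filter fun u : ↥Ws => (u : Fin n ⊕ Fin n) ∈ D).image Subtype.val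
        = (D ∩ G.neighborSet (Sum.inl i)).toFinset := by
      ext t
      simp only [Finset.mem_image, Finset.mem_filter, Set.mem_toFinset, hNI,
        Set.mem_setOf_eq, Set.mem_inter_iff, SimpleGraph.mem_neighborSet]
      constructor
      · rintro ⟨u, ⟨hu1, hu2⟩, rfl⟩
        exact ⟨hu2, hu1⟩
      · rintro ⟨ht1, ht2⟩
        have htW : t ∈ Ws := by
          obtain ⟨b, hb⟩ := hD ht1
          rw [hWs]
          simp [← hb]
        exact ⟨⟨t, htW⟩, ⟨ht2, ht1⟩, rfl⟩
    have hcard : (NI.toFinset.filter fun u : ↥Ws => (u : Fin n ⊕ Fin n) ∈ D).card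
        = (D ∩ G.neighborSet (Sum.inl i)).ncard := by
      rw [Set.ncard_eq_toFinset_card', ← himg,
        Finset.card_image_of_injective _ Subtype.val_injective]
    rw [hcard]
    exact hodd
  -- main identity
  have hmain : ∀ x : ↥Ws → ZMod 2,
      (∑ w ∈ T.toFinset, (x + s0) w) + qForm H (x + s0) = qForm H x := by
    intro x
    simp only [Pi.add_apply]
    rw [Finset.sum_add_distrib, hF6, add_zero, qForm_add, hF2, add_zero, hF5]
    abel_nf
    rw [show (2 : ℤ) • (∑ w ∈ T.toFinset, x w) = 0 by
      rw [two_smul]; exact CharTwo.add_self_eq_zero _]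
    abel
  constructor
  · funext x
    show (-1:ℂ) ^ (∑ᶠ w ∈ T, (((x + s0) w).val)) * graphState H (x + s0) = graphState H x
    rw [ZOp_exp_eval, graphState, graphState, ← mul_assoc, mul_comm ((-1:ℂ) ^ _), mul_assoc,
      ← sgn_add, hmain]
  · funext x
    show (-1:ℂ) ^ (∑ᶠ w ∈ T, (((x + s0) w).val)) *
        ((-1:ℂ) ^ (∑ᶠ w ∈ NI, (((x + s0) w).val)) * graphState H (x + s0))
      = -((-1:ℂ) ^ (∑ᶠ w ∈ NI, ((x w).val)) * graphState H x)
    rw [ZOp_exp_eval, ZOp_exp_eval, ZOp_exp_eval, graphState, graphState]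
    have hNIsum : (∑ w ∈ NI.toFinset, (x + s0) w) = (∑ w ∈ NI.toFinset, x w) + 1 := by
      simp only [Pi.add_apply]
      rw [Finset.sum_add_distrib, hF7]
    rw [hNIsum, sgn_add_one]
    have key : (-1:ℂ)^((∑ w ∈ T.toFinset, (x + s0) w)).val
          * (-1:ℂ)^((qForm H (x + s0))).val
        = (-1:ℂ)^((qForm H x)).val := by
      rw [← sgn_add, hmain]
    linear_combination (-(-1:ℂ)^((∑ w ∈ NI.toFinset, x w)).val *
      ((Real.sqrt 2 : ℂ)⁻¹ ^ Nat.card ↥Ws)) * key
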